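/- Let q be an odd prime power with q ≡ 3 (mod 4), let γ be an odd positive divisor of q - 1, and set n = (q-1)/γ with n > 2. Then for every integer l with 0 ≤ l and 4γl ≤ q - 2γ - 1 there exists a negacyclic Hermitian LCD code over F_{q²} of length n, dimension n - 2l - 1 and minimum distance exactly 2l + 2; in particular this code is MDS. -/

import Mathlib

open Finset
open Fin.NatCast

/-- The negacyclic shift of a word: `(c_0, ..., c_{n-1}) ↦ (-c_{n-1}, c_0, ..., c_{n-2})`. -/
def negashift {F : Type*} [Neg F] {n : ℕ} (c : Fin n → F) : Fin n → F :=
  fun i =>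
    if _h : (i : ℕ) = 0 then -c ⟨n - 1, Nat.sub_lt i.pos Nat.one_pos⟩
    else c ⟨(i : ℕ) - 1, lt_of_le_of_lt (Nat.sub_le _ _) i.isLt⟩

/-- A linear code `C ≤ F^n` is negacyclic if it is closed under the negacyclic shift. -/
def IsNegacyclic {F : Type*} [Field F] {n : ℕ} (C : Submodule F (Fin n → F)) : Prop :=
  ∀ c ∈ C, negashift c ∈ C

/-- `C` is an LCD code: `C ∩ C^⊥ = {0}` for the Euclidean inner product. -/
def IsLCD {F : Type*} [Field F] {n : ℕ} (C : Submodule F (Fin n → F)) : Prop :=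
  ∀ x ∈ C, (∀ y ∈ C, ∑ i, x i * y i = 0) → x = 0

/-- `C` is a Hermitian LCD code: `C ∩ C^{⊥H} = {0}` for the Hermitian inner product
`⟨x, y⟩ = ∑ x_i y_i^q`. -/
def IsHermLCD (q : ℕ) {F : Type*} [Field F] {n : ℕ} (C : Submodule F (Fin n → F)) : Prop :=
  ∀ x ∈ C, (∀ y ∈ C, ∑ i, x i * (y i) ^ q = 0) → x = 0

open scoped Classical in
/-- The Hamming weight of a word. -/
noncomputable def wt {F : Type*} [Zero F] {n : ℕ} (c : Fin n → F) : ℕ :=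
  (Finset.univ.filter fun i => c i ≠ 0).card

/-- The minimum distance of the code `C` is exactly `d`: `d` is the least Hamming weight
of a nonzero codeword. -/
def HasMinDist {F : Type*} [Zero F] {n : ℕ} (C : Set (Fin n → F)) (d : ℕ) : Prop :=
  IsLeast {w : ℕ | ∃ c ∈ C, c ≠ 0 ∧ wt c = w} d

private lemma aux_vdm {E : Type*} [Field E] {N : ℕ} (v : Fin N → E)
    (hv : Function.Injective v) (z : Fin N → E)
    (hz : ∀ t : Fin N, ∑ s, v s ^ (t : ℕ) * z s = 0) : z = 0 := by
  have hdet : (Matrix.vandermonde v).det ≠ 0 := by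
    rw [Matrix.det_vandermonde]
    refine Finset.prod_ne_zero_iff.mpr fun i _ => Finset.prod_ne_zero_iff.mpr fun j hj => ?_
    refine sub_ne_zero.mpr fun hEq => ?_
    rw [Finset.mem_Ioi] at hj
    exact absurd (hv hEq) (ne_of_gt hj)
  have hdetT : ((Matrix.vandermonde v).transpose).det ≠ 0 := by rwa [Matrix.det_transpose]
  refine Matrix.eq_zero_of_mulVec_eq_zero hdetT ?_
  funext t
  simpa [Matrix.mulVec, dotProduct, Matrix.vandermonde] using hz t

private lemma aux_geom {E : Type*} [Field E] {n : ℕ} {r : E} (h1 : r ≠ 1) (hn : r ^ n = 1) :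
    ∑ i ∈ Finset.range n, r ^ i = 0 := by
  rw [geom_sum_eq h1, hn]
  simp

set_option maxHeartbeats 2000000 in
theorem stmt_14 (q : ℕ) (hq : IsPrimePow q) (hqodd : Odd q) (hmod : q % 4 = 3)
    (E : Type) [Field E] [Fintype E] (hE : Fintype.card E = q ^ 2)
    (γ : ℕ) (hγ : 0 < γ) (hγpar : Odd γ) (hdvd : γ ∣ q - 1)
    (n : ℕ) (hn : n = (q - 1) / γ) (hn2 : 2 < n)
    (l : ℕ) (hl : 4 * γ * l + 2 * γ + 1 ≤ q) :
    ∃ C : Submodule E (Fin n → E),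
      IsNegacyclic C ∧ IsHermLCD q C ∧
      Module.finrank E C = n - 2 * l - 1 ∧
      HasMinDist (C : Set (Fin n → E)) (2 * l + 2) := by
  classical
  have hq3 : 3 ≤ q := by omega
  have hγn : γ * n = q - 1 := by rw [hn]; exact Nat.mul_div_cancel' hdvd
  obtain ⟨s, hs⟩ := hγpar
  -- n ≡ 2 [MOD 4]
  have hn4 : n % 4 = 2 := by
    rcases Nat.even_or_odd n with he | ho
    · obtain ⟨h, hh⟩ := he
      rcases Nat.even_or_odd h with he2 | ho2
      · obtain ⟨h', hh'⟩ := he2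
        exfalso
        have h4 : q - 1 = 4 * (γ * h') := by rw [← hγn, hh, hh']; ring
        omega
      · obtain ⟨h', hh'⟩ := ho2
        omega
    · exfalso
      have : Odd (γ * n) := (by exact ⟨s, hs⟩ : Odd γ).mul ho
      rw [hγn] at this
      obtain ⟨c, hc⟩ := this
      omega
  obtain ⟨u, hu⟩ : ∃ u, n = 4 * u + 2 := ⟨n / 4, by omega⟩
  -- 4l + 2 ≤ n
  have hln : 4 * l + 2 ≤ n := by
    have h1 : γ * (4 * l + 2) ≤ γ * n := by
      have : γ * (4 * l + 2) = 4 * γ * l + 2 * γ := by ring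
      omega
    exact Nat.le_of_mul_le_mul_left h1 hγ
  have hlu : l ≤ u := by omega
  set j₀ : ℕ := u - l with hj₀
  -- 2n divides q² - 1
  have hq21 : q ^ 2 - 1 = (q + 1) * (q - 1) := by
    have := Nat.sq_sub_sq q 1
    simpa using this
  obtain ⟨e0, he0⟩ : ∃ e0, q + 1 = 2 * e0 := by obtain ⟨c, hc⟩ := hqodd; exact ⟨c + 1, by omega⟩
  have hdvd2n : 2 * n ∣ q ^ 2 - 1 := by
    refine ⟨e0 * γ, ?_⟩
    rw [hq21, ← hγn, he0]
    ring
  have hq2pos : 0 < q ^ 2 - 1 := by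
    have h9 : 9 ≤ q * q := Nat.mul_le_mul hq3 hq3
    have : q ^ 2 = q * q := sq q
    omega
  -- an element ω of E of multiplicative order 2n
  have hcardu : Fintype.card Eˣ = q ^ 2 - 1 := by rw [Fintype.card_units, hE]
  obtain ⟨g, hg⟩ := IsCyclic.exists_generator (α := Eˣ)
  have hog : orderOf g = q ^ 2 - 1 := by
    rw [orderOf_eq_card_of_forall_mem_zpowers hg, Nat.card_eq_fintype_card, hcardu]
  set β : Eˣ := g ^ ((q ^ 2 - 1) / (2 * n)) with hβ
  have hoβ : orderOf β = 2 * n := by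
    rw [hβ, orderOf_pow, hog, Nat.gcd_eq_right (Nat.div_dvd_of_dvd hdvd2n),
      Nat.div_div_self hdvd2n (by omega)]
  set ω : E := (β : E) with hω
  have hω0 : ω ≠ 0 := Units.ne_zero β
  have hωiff : ∀ a b : ℕ, ω ^ a = ω ^ b ↔ a ≡ b [MOD 2 * n] := by
    intro a b
    have h1 : ω ^ a = ω ^ b ↔ β ^ a = β ^ b := by
      rw [hω, ← Units.val_pow_eq_pow_val, ← Units.val_pow_eq_pow_val]
      exact ⟨fun h => Units.ext h, congrArg _⟩
    rw [h1, pow_eq_pow_iff_modEq, hoβ]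
  have hω2n : ω ^ (2 * n) = 1 := by
    have := (hωiff (2 * n) 0).mpr ((Nat.modEq_zero_iff_dvd).mpr dvd_rfl)
    simpa using this
  have hωn : ω ^ n = -1 := by
    have h2 : ω ^ n * ω ^ n = 1 := by rw [← pow_add]; rw [show n + n = 2 * n by ring]; exact hω2n
    have hsq : (ω ^ n - 1) * (ω ^ n + 1) = 0 := by linear_combination h2
    rcases mul_eq_zero.mp hsq with h | h
    · exfalso
      have h1 : ω ^ n = ω ^ 0 := by rw [pow_zero]; exact sub_eq_zero.mp h
      have h2' := (hωiff n 0).mp h1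
      have h3 := (Nat.modEq_zero_iff_dvd).mp h2'
      have := Nat.le_of_dvd (by omega) h3
      omega
    · exact eq_neg_of_add_eq_zero_left h
  haveI : NeZero n := ⟨by omega⟩
  -- the evaluation (Fourier) transform
  set A : Fin n → E := fun k => ω ^ (2 * (k : ℕ) + 1) with hA
  have hAinj : Function.Injective A := by
    intro a b hab
    have ha := a.isLt; have hb := b.isLt
    have h1 : (2 * (a : ℕ) + 1) % (2 * n) = (2 * (b : ℕ) + 1) % (2 * n) := (hωiff _ _).mp hab
    rw [Nat.mod_eq_of_lt (by omega), Nat.mod_eq_of_lt (by omega)] at h1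
    exact Fin.ext (by omega)
  set T : (Fin n → E) →ₗ[E] (Fin n → E) := (Matrix.vandermonde A).mulVecLin with hTdef
  have hT : ∀ (x : Fin n → E) (k : Fin n),
      T x k = ∑ j : Fin n, ω ^ ((2 * (k : ℕ) + 1) * (j : ℕ)) * x j := by
    intro x k
    simp only [hTdef, Matrix.mulVecLin_apply, Matrix.mulVec, dotProduct,
      Matrix.vandermonde_apply, hA]
    exact Finset.sum_congr rfl fun j _ => by rw [pow_mul]
  have hTinj : Function.Injective T := by
    have hdet : (Matrix.vandermonde A).det ≠ 0 := by
      rw [Matrix.det_vandermonde]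
      refine Finset.prod_ne_zero_iff.mpr fun i _ => Finset.prod_ne_zero_iff.mpr fun j hj => ?_
      refine sub_ne_zero.mpr fun hEq => ?_
      rw [Finset.mem_Ioi] at hj
      exact absurd (hAinj hEq) (ne_of_gt hj)
    intro x y hxy
    have h0 : (Matrix.vandermonde A).mulVec (x - y) = 0 := by
      rw [Matrix.mulVec_sub]
      have : (Matrix.vandermonde A).mulVec x = (Matrix.vandermonde A).mulVec y := hxy
      rw [this, sub_self]
    have := Matrix.eq_zero_of_mulVec_eq_zero hdet h0
    exact sub_eq_zero.mp this
  -- the defining set J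
  set J : Finset (Fin n) := (Finset.range (2 * l + 1)).image (fun t => ((j₀ + t : ℕ) : Fin n))
    with hJdef
  have hJlt : ∀ t : ℕ, t ≤ 2 * l → j₀ + t < n := by intro t ht; omega
  have hJmem : ∀ j : Fin n, j ∈ J ↔ j₀ ≤ (j : ℕ) ∧ (j : ℕ) ≤ j₀ + 2 * l := by
    intro j
    simp only [hJdef, Finset.mem_image, Finset.mem_range]
    constructor
    · rintro ⟨t, ht, rfl⟩
      rw [Fin.val_cast_of_lt (hJlt t (by omega))]
      omega
    · rintro ⟨h1, h2⟩
      refine ⟨(j : ℕ) - j₀, by omega, ?_⟩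
      apply Fin.ext
      rw [Fin.val_cast_of_lt (by omega : j₀ + ((j : ℕ) - j₀) < n)]
      omega
  have hJcard : J.card = 2 * l + 1 := by
    rw [hJdef, Finset.card_image_of_injOn, Finset.card_range]
    intro a ha b hb hab
    simp only [Finset.mem_coe, Finset.mem_range] at ha hb
    have := congrArg Fin.val hab
    rw [Fin.val_cast_of_lt (hJlt a (by omega)), Fin.val_cast_of_lt (hJlt b (by omega))] at this
    omega
  -- the code
  set C : Submodule E (Fin n → E) :=
    LinearMap.ker ((LinearMap.funLeft E E (fun j : {i : Fin n // i ∈ J} => (j : Fin n))).comp T)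
    with hCdef
  have hCmem : ∀ x, x ∈ C ↔ ∀ j ∈ J, T x j = 0 := by
    intro x
    simp only [hCdef, LinearMap.mem_ker, LinearMap.coe_comp, Function.comp_apply,
      LinearMap.funLeft_apply, funext_iff, Pi.zero_apply]
    exact ⟨fun H j hj => H ⟨j, hj⟩, fun H j => H j j.2⟩
  -- the negacyclic shift acts as multiplication by ω^(2k+1) on the transform
  have hshift : ∀ (x : Fin n → E) (k : Fin n),
      T (negashift x) k = ω ^ (2 * (k : ℕ) + 1) * T x k := by
    intro x k
    obtain ⟨n', hn'⟩ : ∃ n', n = n' + 1 := ⟨n - 1, by omega⟩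
    set K : ℕ := 2 * (k : ℕ) + 1 with hK
    rw [hT, hT]
    have hL : ∑ j : Fin n, ω ^ (K * (j : ℕ)) * negashift x j
        = ∑ j ∈ Finset.range n, (fun j : ℕ => ω ^ (K * j) * negashift x ((j : ℕ) : Fin n)) j := by
      rw [← Fin.sum_univ_eq_sum_range]
      exact Finset.sum_congr rfl fun j _ => by rw [Fin.cast_val_eq_self]
    have hR : ∑ j : Fin n, ω ^ (K * (j : ℕ)) * x j
        = ∑ j ∈ Finset.range n, (fun j : ℕ => ω ^ (K * j) * x ((j : ℕ) : Fin n)) j := by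
      rw [← Fin.sum_univ_eq_sum_range]
      exact Finset.sum_congr rfl fun j _ => by rw [Fin.cast_val_eq_self]
    have hrange : Finset.range n = Finset.range (n' + 1) := by rw [hn']
    rw [hL, hR, hrange, Finset.sum_range_succ', Finset.sum_range_succ, mul_add, Finset.mul_sum]
    congr 1
    · refine Finset.sum_congr rfl fun j hj => ?_
      rw [Finset.mem_range] at hj
      have hjn : j < n := by omega
      have hj1n : j + 1 < n := by omega
      have hval : (((j + 1 : ℕ)) : Fin n).val = j + 1 := Fin.val_cast_of_lt hj1n
      have hne : (((j + 1 : ℕ)) : Fin n).val ≠ 0 := by rw [hval]; exact Nat.succ_ne_zero j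
      have harg : (⟨(((j + 1 : ℕ) : Fin n) : ℕ) - 1,
          lt_of_le_of_lt (Nat.sub_le _ _) ((j + 1 : ℕ) : Fin n).isLt⟩ : Fin n)
          = ((j : ℕ) : Fin n) := by
        apply Fin.ext
        show (((j + 1 : ℕ) : Fin n) : ℕ) - 1 = (((j : ℕ) : Fin n) : ℕ)
        rw [hval, Fin.val_cast_of_lt hjn]
        omega
      have hnsx : negashift x (((j + 1 : ℕ)) : Fin n) = x ((j : ℕ) : Fin n) := by
        rw [negashift, dif_neg hne]
        exact congrArg x harg
      rw [hnsx, ← mul_assoc, ← pow_add,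
        show K + K * j = K * (j + 1) by ring]
    · -- first term of LHS vs last term of RHS
      have hn'lt : n' < n := by omega
      have hKodd : Odd K := ⟨(k : ℕ), by omega⟩
      have h0val : ((((0 : ℕ)) : Fin n) : ℕ) = 0 := by simp
      have hfin : (⟨n - 1, Nat.sub_lt (((0 : ℕ) : Fin n)).pos Nat.one_pos⟩ : Fin n)
          = ((n' : ℕ) : Fin n) := by
        apply Fin.ext
        show n - 1 = (((n' : ℕ) : Fin n) : ℕ)
        rw [Fin.val_cast_of_lt hn'lt]
        omega
      have hns0 : negashift x (((0 : ℕ)) : Fin n) = -x ((n' : ℕ) : Fin n) := by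
        rw [negashift, dif_pos h0val]
        exact congrArg (fun z => -x z) hfin
      have hKn : K + K * n' = n * K := by
        have h1 : K * (n' + 1) = K * n := by rw [← hn']
        calc K + K * n' = K * (n' + 1) := by ring
          _ = K * n := h1
          _ = n * K := Nat.mul_comm _ _
      rw [hns0, show K * 0 = 0 by ring, pow_zero, one_mul, ← mul_assoc, ← pow_add, hKn,
        pow_mul, hωn, hKodd.neg_one_pow, neg_one_mul]
  refine ⟨C, ?_, ?_, ?_, ?_⟩
  · -- negacyclic
    intro c hc
    rw [hCmem] at hc ⊢
    intro j hj
    rw [hshift, hc j hj, mul_zero]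
  · -- Hermitian LCD
    intro x hx hp
    have hTx0 : T x = 0 := by
      funext k
      rw [Pi.zero_apply]
      by_cases hk : k ∈ J
      · exact (hCmem x).mp hx k hk
      · rw [hJmem] at hk
        set K : ℕ := (k : ℕ) with hKdef
        have hKlt : K < n := k.isLt
        obtain ⟨mn, hmlt, hmnJ, hsum⟩ : ∃ mn, mn < n ∧ ¬(j₀ ≤ mn ∧ mn ≤ j₀ + 2 * l) ∧
            (mn + K = 2 * u ∨ mn + K = n + 2 * u) := by
          by_cases hc : K ≤ 2 * u
          · exact ⟨2 * u - K, by omega, by omega, Or.inl (by omega)⟩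
          · exact ⟨n + 2 * u - K, by omega, by omega, Or.inr (by omega)⟩
        set y : Fin n → E := fun i => ω ^ ((2 * n - (2 * mn + 1)) * (i : ℕ)) with hy
        have hyC : y ∈ C := by
          rw [hCmem]
          intro j hj
          obtain ⟨hj1, hj2⟩ := (hJmem j).mp hj
          rw [hT]
          have hterm : ∀ i : Fin n, ω ^ ((2 * (j : ℕ) + 1) * (i : ℕ)) * y i
              = (ω ^ (2 * ((j : ℕ) + (n - mn)))) ^ (i : ℕ) := by
            intro i
            rw [hy]
            rw [← pow_add, ← add_mul]
            have hexp : 2 * (j : ℕ) + 1 + (2 * n - (2 * mn + 1)) = 2 * ((j : ℕ) + (n - mn)) := by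
              omega
            rw [hexp, pow_mul]
          rw [Finset.sum_congr rfl fun i _ => hterm i]
          rw [Fin.sum_univ_eq_sum_range (fun i => (ω ^ (2 * ((j : ℕ) + (n - mn)))) ^ i) n]
          apply aux_geom
          · intro hr1
            have h1 : ω ^ (2 * ((j : ℕ) + (n - mn))) = ω ^ 0 := by rw [pow_zero]; exact hr1
            have h2 := (Nat.modEq_zero_iff_dvd).mp ((hωiff _ _).mp h1)
            have h3 : n ∣ ((j : ℕ) + (n - mn)) := Nat.dvd_of_mul_dvd_mul_left (by omega) h2
            obtain ⟨c, hc⟩ := h3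
            have hjlt := j.isLt
            have hc2 : c ≤ 2 → False := by
              intro hc2
              interval_cases c <;> omega
            have : n * c ≥ n * 3 := by
              by_contra hlt
              exact hc2 (by
                by_contra h'
                push_neg at h' hlt
                have := Nat.mul_le_mul_left n h'
                omega)
            omega
          · rw [← pow_mul]
            have : 2 * ((j : ℕ) + (n - mn)) * n = 2 * n * ((j : ℕ) + (n - mn)) := by ring
            rw [this, pow_mul, hω2n, one_pow]
        have hpy := hp y hyC
        have hq1' : q = γ * n + 1 := by rw [hγn]; omega
        have hbase : (2 * n - (2 * mn + 1)) * q ≡ 2 * K + 1 [MOD 2 * n] := by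
          rw [Nat.modEq_iff_dvd]
          have hle : 2 * mn + 1 ≤ 2 * n := by omega
          have hcast : ((2 * n - (2 * mn + 1) : ℕ) : ℤ)
              = 2 * (n : ℤ) - (2 * (mn : ℤ) + 1) := by
            push_cast [Nat.cast_sub hle]
            ring
          push_cast [hcast]
          have hnZ : (n : ℤ) = 4 * (u : ℤ) + 2 := by exact_mod_cast congrArg (Nat.cast : ℕ → ℤ) hu
          have hqZ : (q : ℤ) = (2 * (s : ℤ) + 1) * (4 * (u : ℤ) + 2) + 1 := by
            have : q = (2 * s + 1) * (4 * u + 2) + 1 := by rw [← hs, ← hu]; exact hq1'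
            exact_mod_cast congrArg (Nat.cast : ℕ → ℤ) this
          rcases hsum with h | h
          · have hmZ : (mn : ℤ) = 2 * (u : ℤ) - (K : ℤ) := by
              have := congrArg (Nat.cast : ℕ → ℤ) h
              push_cast at this
              linarith
            refine ⟨-(4 * (u : ℤ) * (s : ℤ) + 2 * u + 3 * s + 2 + (K : ℤ) * (2 * s + 1)), ?_⟩
            rw [hnZ, hqZ, hmZ]
            ring
          · have hmZ : (mn : ℤ) = (n : ℤ) + 2 * (u : ℤ) - (K : ℤ) := by
              have := congrArg (Nat.cast : ℕ → ℤ) h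
              push_cast at this
              linarith
            refine ⟨1 - 2 * (K : ℤ) * (s : ℤ) - (K : ℤ) + 4 * (u : ℤ) * (s : ℤ) + 2 * u + s, ?_⟩
            rw [hmZ, hnZ, hqZ]
            ring
        have hTxk : T x k = ∑ i : Fin n, x i * (y i) ^ q := by
          rw [hT]
          refine Finset.sum_congr rfl fun i _ => ?_
          rw [hy, ← pow_mul, mul_comm (x i)]
          congr 1
          rw [hωiff]
          have h2 : (2 * n - (2 * mn + 1)) * (i : ℕ) * q
              = (2 * n - (2 * mn + 1)) * q * (i : ℕ) := by ring
          rw [h2]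
          exact (hbase.mul_right (i : ℕ)).symm
        rw [hTxk]
        exact hpy
    exact hTinj (by rw [hTx0, map_zero])
  · -- dimension
    have hsurj : Function.Surjective
        ((LinearMap.funLeft E E (fun j : {i : Fin n // i ∈ J} => (j : Fin n))).comp T) := by
      exact (LinearMap.funLeft_surjective_of_injective E E _ Subtype.val_injective).comp
        (LinearMap.surjective_of_injective hTinj)
    have hrn := LinearMap.finrank_range_add_finrank_ker
      ((LinearMap.funLeft E E (fun j : {i : Fin n // i ∈ J} => (j : Fin n))).comp T)
    rw [LinearMap.range_eq_top.mpr hsurj, finrank_top, Module.finrank_fintype_fun_eq_card,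
      Fintype.card_coe, hJcard, Module.finrank_fin_fun] at hrn
    rw [hCdef]
    omega
  · -- minimum distance
    have hwtS : ∀ d : Fin n → E, wt d = (Finset.univ.filter fun i => d i ≠ 0).card := by
      intro d
      simp [wt]
    have hrow : ∀ (x : Fin n → E), x ∈ C → ∀ t : ℕ, t < 2 * l + 1 →
        ∑ i : Fin n, ω ^ ((2 * (j₀ + t) + 1) * (i : ℕ)) * x i = 0 := by
      intro x hx t ht
      have hlt : j₀ + t < n := by omega
      have hj : ((j₀ + t : ℕ) : Fin n) ∈ J := by
        rw [hJmem, Fin.val_cast_of_lt hlt]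
        omega
      have h0 := (hCmem x).mp hx _ hj
      rw [hT, Fin.val_cast_of_lt hlt] at h0
      exact h0
    -- key vanishing lemma
    have hvan : ∀ (S' : Finset (Fin n)), S'.card = 2 * l + 1 → ∀ x : Fin n → E,
        (∀ i, i ∉ S' → x i = 0) → x ∈ C → x = 0 := by
      intro S' hS' x hsupp hx
      set e := S'.equivFinOfCardEq hS' with he
      set v : Fin (2 * l + 1) → E := fun a => ω ^ (2 * ((e.symm a : Fin n) : ℕ)) with hv
      have hvinj : Function.Injective v := by
        intro a b hab
        have h1 : (2 * ((e.symm a : Fin n) : ℕ)) % (2 * n)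
            = (2 * ((e.symm b : Fin n) : ℕ)) % (2 * n) := (hωiff _ _).mp hab
        have ha := (e.symm a).1.isLt
        have hb := (e.symm b).1.isLt
        rw [Nat.mod_eq_of_lt (by omega), Nat.mod_eq_of_lt (by omega)] at h1
        apply e.symm.injective
        exact Subtype.ext (Fin.ext (by omega))
      set z : Fin (2 * l + 1) → E :=
        fun a => ω ^ ((2 * j₀ + 1) * ((e.symm a : Fin n) : ℕ)) * x (e.symm a) with hz
      have hz0 : z = 0 := by
        apply aux_vdm v hvinj
        intro t
        have h1 : ∑ i ∈ S', ω ^ ((2 * (j₀ + (t : ℕ)) + 1) * (i : ℕ)) * x i = 0 := by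
          rw [Finset.sum_subset (Finset.subset_univ S')
            (fun i _ hi => by rw [hsupp i hi, mul_zero])]
          exact hrow x hx (t : ℕ) t.isLt
        calc ∑ a, v a ^ (t : ℕ) * z a
            = ∑ a : Fin (2 * l + 1),
              ω ^ ((2 * (j₀ + (t : ℕ)) + 1) * ((e.symm a : Fin n) : ℕ)) * x (e.symm a) := by
              refine Finset.sum_congr rfl fun a _ => ?_
              rw [hv, hz, ← pow_mul, ← mul_assoc, ← pow_add]
              congr 2
              ring
          _ = ∑ i ∈ S', ω ^ ((2 * (j₀ + (t : ℕ)) + 1) * (i : ℕ)) * x i := by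
              rw [← Finset.sum_coe_sort S'
                (fun i => ω ^ ((2 * (j₀ + (t : ℕ)) + 1) * (i : ℕ)) * x i)]
              exact Equiv.sum_comp e.symm
                (fun i : {x : Fin n // x ∈ S'} =>
                  ω ^ ((2 * (j₀ + (t : ℕ)) + 1) * ((i : Fin n) : ℕ)) * x i)
          _ = 0 := h1
      funext i
      rw [Pi.zero_apply]
      by_cases hi : i ∈ S'
      · have h2 := congrFun hz0 (e ⟨i, hi⟩)
        rw [hz] at h2
        simp only [Equiv.symm_apply_apply, Pi.zero_apply] at h2
        rcases mul_eq_zero.mp h2 with h | h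
        · exact absurd h (pow_ne_zero _ hω0)
        · exact h
      · exact hsupp i hi
    constructor
    · -- a codeword of weight exactly 2l+2 exists
      obtain ⟨S'', hS''sub, hS''card⟩ :=
        Finset.exists_subset_card_eq
          (by rw [Finset.card_univ, Fintype.card_fin]; omega : 2 * l + 2 ≤ (Finset.univ : Finset (Fin n)).card)
      set e2 := S''.equivFinOfCardEq hS''card with he2
      set v2 : Fin (2 * l + 2) → E := fun a => ω ^ (2 * ((e2.symm a : Fin n) : ℕ)) with hv2
      have hv2inj : Function.Injective v2 := by
        intro a b hab
        have h1 : (2 * ((e2.symm a : Fin n) : ℕ)) % (2 * n)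
            = (2 * ((e2.symm b : Fin n) : ℕ)) % (2 * n) := (hωiff _ _).mp hab
        have ha := (e2.symm a).1.isLt
        have hb := (e2.symm b).1.isLt
        rw [Nat.mod_eq_of_lt (by omega), Nat.mod_eq_of_lt (by omega)] at h1
        apply e2.symm.injective
        exact Subtype.ext (Fin.ext (by omega))
      -- a nonzero kernel vector of the (2l+1)×(2l+2) Vandermonde system
      have hker : ∃ w : Fin (2 * l + 2) → E, w ≠ 0 ∧
          ∀ t : Fin (2 * l + 1), ∑ a, v2 a ^ (t : ℕ) * w a = 0 := by
        set B : Matrix (Fin (2 * l + 1)) (Fin (2 * l + 2)) E :=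
          Matrix.of fun t a => v2 a ^ (t : ℕ) with hB
        have hnotinj : ¬ Function.Injective B.mulVecLin := by
          intro hinj
          have := LinearMap.finrank_le_finrank_of_injective hinj
          rw [Module.finrank_fin_fun, Module.finrank_fin_fun] at this
          omega
        have hkerne : LinearMap.ker B.mulVecLin ≠ ⊥ := by
          intro hbot
          exact hnotinj (LinearMap.ker_eq_bot.mp hbot)
        obtain ⟨w, hwker, hw0⟩ := (Submodule.ne_bot_iff _).mp hkerne
        refine ⟨w, hw0, fun t => ?_⟩
        have := congrFun (LinearMap.mem_ker.mp hwker) t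
        simpa [hB, Matrix.mulVecLin_apply, Matrix.mulVec, dotProduct] using this
      obtain ⟨w, hw0, hweq⟩ := hker
      -- all coordinates of w are nonzero
      have hwne : ∀ a, w a ≠ 0 := by
        intro a0 ha0
        apply hw0
        have hcard' : (Finset.univ.erase a0).card = 2 * l + 1 := by
          rw [Finset.card_erase_of_mem (Finset.mem_univ _), Finset.card_univ, Fintype.card_fin]
          omega
        set e3 := (Finset.univ.erase a0).equivFinOfCardEq hcard' with he3
        set v3 : Fin (2 * l + 1) → E := fun b => v2 (e3.symm b) with hv3
        have hv3inj : Function.Injective v3 := by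
          intro a b hab
          exact e3.symm.injective (Subtype.ext (hv2inj hab))
        set z3 : Fin (2 * l + 1) → E := fun b => w (e3.symm b) with hz3def
        have hz3 : z3 = 0 := by
          apply aux_vdm v3 hv3inj
          intro t
          calc ∑ b, v3 b ^ (t : ℕ) * z3 b
              = ∑ a ∈ Finset.univ.erase a0, v2 a ^ (t : ℕ) * w a := by
                rw [← Finset.sum_coe_sort (Finset.univ.erase a0)
                  (fun a => v2 a ^ (t : ℕ) * w a)]
                exact Equiv.sum_comp e3.symm
                  (fun a : {x : Fin (2 * l + 2) // x ∈ Finset.univ.erase a0} =>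
                    v2 a ^ (t : ℕ) * w a)
            _ = ∑ a, v2 a ^ (t : ℕ) * w a :=
                Finset.sum_erase _ (by rw [ha0, mul_zero])
            _ = 0 := hweq t
        funext a
        rw [Pi.zero_apply]
        by_cases ha : a = a0
        · rw [ha]; exact ha0
        · have hmem : a ∈ Finset.univ.erase a0 := by
            rw [Finset.mem_erase]; exact ⟨ha, Finset.mem_univ a⟩
          have h2 := congrFun hz3 (e3 ⟨a, hmem⟩)
          rw [hz3def] at h2
          simpa using h2
      -- the codeword
      obtain ⟨c, hcS, hcS'⟩ : ∃ c : Fin n → E,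
          (∀ i (hi : i ∈ S''), c i = (ω ^ ((2 * j₀ + 1) * (i : ℕ)))⁻¹ * w (e2 ⟨i, hi⟩)) ∧
          (∀ i, i ∉ S'' → c i = 0) :=
        ⟨fun i => if hi : i ∈ S'' then (ω ^ ((2 * j₀ + 1) * (i : ℕ)))⁻¹ * w (e2 ⟨i, hi⟩) else 0,
          fun i hi => dif_pos hi, fun i hi => dif_neg hi⟩
      have hcC : c ∈ C := by
        rw [hCmem]
        intro j hj
        obtain ⟨h1, h2⟩ := (hJmem j).mp hj
        set t : ℕ := (j : ℕ) - j₀ with ht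
        have hjval : (j : ℕ) = j₀ + t := by omega
        rw [hT]
        have hstep : ∀ a : Fin (2 * l + 2),
            ω ^ ((2 * (j : ℕ) + 1) * ((e2.symm a : Fin n) : ℕ)) * c (e2.symm a)
            = v2 a ^ t * w a := by
          intro a
          have hmem := (e2.symm a).2
          rw [hcS _ hmem]
          have heta : (⟨((e2.symm a : Fin n)), hmem⟩ : {i : Fin n // i ∈ S''}) = e2.symm a :=
            Subtype.ext rfl
          rw [heta, Equiv.apply_symm_apply]
          have hexp : (2 * (j : ℕ) + 1) * ((e2.symm a : Fin n) : ℕ)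
              = 2 * ((e2.symm a : Fin n) : ℕ) * t + (2 * j₀ + 1) * ((e2.symm a : Fin n) : ℕ) := by
            rw [hjval]; ring
          rw [hexp, pow_add,
            mul_assoc (ω ^ (2 * ((e2.symm a : Fin n) : ℕ) * t)),
            mul_inv_cancel_left₀ (pow_ne_zero _ hω0), hv2, ← pow_mul]
        calc ∑ i : Fin n, ω ^ ((2 * (j : ℕ) + 1) * (i : ℕ)) * c i
            = ∑ i ∈ S'', ω ^ ((2 * (j : ℕ) + 1) * (i : ℕ)) * c i := by
              rw [Finset.sum_subset (Finset.subset_univ S'')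
                (fun i _ hi => by rw [hcS' i hi, mul_zero])]
          _ = ∑ a : Fin (2 * l + 2),
              ω ^ ((2 * (j : ℕ) + 1) * ((e2.symm a : Fin n) : ℕ)) * c (e2.symm a) := by
              rw [← Finset.sum_coe_sort S''
                (fun i => ω ^ ((2 * (j : ℕ) + 1) * (i : ℕ)) * c i)]
              exact (Equiv.sum_comp e2.symm
                (fun i : {x : Fin n // x ∈ S''} =>
                  ω ^ ((2 * (j : ℕ) + 1) * ((i : Fin n) : ℕ)) * c i)).symm
          _ = ∑ a : Fin (2 * l + 2), v2 a ^ t * w a :=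
              Finset.sum_congr rfl fun a _ => hstep a
          _ = 0 := by
              have := hweq ⟨t, by omega⟩
              simpa using this
      have hc0 : c ≠ 0 := by
        obtain ⟨i0, hi0⟩ := Finset.card_pos.mp (by rw [hS''card]; omega : 0 < S''.card)
        intro hcz
        have := congrFun hcz i0
        rw [hcS _ hi0, Pi.zero_apply] at this
        exact hwne _ (by
          rcases mul_eq_zero.mp this with h | h
          · exact absurd h (inv_ne_zero (pow_ne_zero _ hω0))
          · exact h)
      have hwt : wt c = 2 * l + 2 := by
        rw [hwtS]
        have : (Finset.univ.filter fun i => c i ≠ 0) = S'' := by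
          ext i
          rw [Finset.mem_filter]
          constructor
          · rintro ⟨-, hne⟩
            by_contra hi
            exact hne (hcS' i hi)
          · intro hi
            refine ⟨Finset.mem_univ i, ?_⟩
            rw [hcS _ hi]
            exact mul_ne_zero (inv_ne_zero (pow_ne_zero _ hω0)) (hwne _)
        rw [this, hS''card]
      exact ⟨c, hcC, hc0, hwt⟩
    · -- lower bound
      intro w hw
      obtain ⟨c, hcC, hc0, rfl⟩ := hw
      by_contra hlt
      push_neg at hlt
      have hwle : wt c ≤ 2 * l + 1 := by omega
      rw [hwtS] at hwle
      obtain ⟨S', hsub, hS'card⟩ := Finset.exists_superset_card_eq hwle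
        (by rw [Fintype.card_fin]; omega)
      apply hc0
      refine hvan S' hS'card c (fun i hi => ?_) hcC
      by_contra hne
      exact hi (hsub (Finset.mem_filter.mpr ⟨Finset.mem_univ i, hne⟩))
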